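/- arXiv:1609.03328 — 5 statements merged into one kernel-verified Lean document; each statement's English description precedes it below -/
import Mathlib

section
/- For every integer m ≥ 1 there exist constants K > 0 and δ > 0 such that if the starting point x₀ satisfies ‖x₀ − x*‖ ≤ δ, then the Shamanskii iterates x^{(0)} = x₀, x^{(j+1)} = S_m(x^{(j)}) are well defined (i.e., J(x^{(j)}) is invertible and all iterates remain in the ball of radius δ around x*) and converge to x* with order m+1: for every j, ‖x^{(j+1)} − x*‖ ≤ K‖x^{(j)} − x*‖^{m+1}. -/
open scoped RealInnerProductSpace

/-- Inner (chord) iterates with frozen matrix `A`: `y₀ = x`, `y_{k+1} = y_k − A⁻¹ F(y_k)`.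
If `A` is not invertible, `A.inverse = 0`. -/
noncomputable def chordIter {n : ℕ}
    (F : EuclideanSpace ℝ (Fin n) → EuclideanSpace ℝ (Fin n))
    (A : EuclideanSpace ℝ (Fin n) →L[ℝ] EuclideanSpace ℝ (Fin n))
    (x : EuclideanSpace ℝ (Fin n)) : ℕ → EuclideanSpace ℝ (Fin n)
  | 0 => x
  | k + 1 => chordIter F A x k - A.inverse (F (chordIter F A x k))

/-- Shamanskii `m`-step map: `m` chord steps with the Jacobian frozen at `x`. -/
noncomputable def shamanskii {n : ℕ} (m : ℕ)
    (F : EuclideanSpace ℝ (Fin n) → EuclideanSpace ℝ (Fin n))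
    (J : EuclideanSpace ℝ (Fin n) →
      (EuclideanSpace ℝ (Fin n) →L[ℝ] EuclideanSpace ℝ (Fin n)))
    (x : EuclideanSpace ℝ (Fin n)) : EuclideanSpace ℝ (Fin n) :=
  chordIter F (J x) x m



lemma sham_mv {n : ℕ}
    (F : EuclideanSpace ℝ (Fin n) → EuclideanSpace ℝ (Fin n))
    (J : EuclideanSpace ℝ (Fin n) →
      (EuclideanSpace ℝ (Fin n) →L[ℝ] EuclideanSpace ℝ (Fin n)))
    (hJ : ∀ x, HasFDerivAt F (J x) x)
    (γ : ℝ) (hγ : 0 < γ)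
    (hLip : ∀ x y, ‖J x - J y‖ ≤ γ * ‖x - y‖)
    (xs x y : EuclideanSpace ℝ (Fin n)) :
    ‖F y - F xs - (J x) (y - xs)‖ ≤ γ * (‖y - xs‖ + ‖x - xs‖) * ‖y - xs‖ := by
  have h := Convex.norm_image_sub_le_of_norm_hasFDerivWithin_le'
    (f := F) (f' := J) (φ := J x) (s := segment ℝ xs y)
    (C := γ * (‖y - xs‖ + ‖x - xs‖))
    (fun z hz => (hJ z).hasFDerivWithinAt)
    (fun z hz => by
      rcases hz with ⟨a, b, ha, hb, hab, rfl⟩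
      have hz1 : ‖a • xs + b • y - xs‖ ≤ ‖y - xs‖ := by
        have : a • xs + b • y - xs = b • (y - xs) := by
          have : a = 1 - b := by linarith
          rw [this]; module
        rw [this, norm_smul]
        simpa [abs_of_nonneg hb] using
          mul_le_of_le_one_left (norm_nonneg _) (by simpa [abs_of_nonneg hb] using by linarith : |b| ≤ 1)
      calc ‖J (a • xs + b • y) - J x‖ ≤ γ * ‖a • xs + b • y - x‖ := hLip _ _
        _ ≤ γ * (‖y - xs‖ + ‖x - xs‖) := by
            have : ‖a • xs + b • y - x‖ ≤ ‖a • xs + b • y - xs‖ + ‖x - xs‖ := by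
              have h1 := norm_sub_le_norm_sub_add_norm_sub (a • xs + b • y) xs x
              rwa [norm_sub_rev xs x] at h1
            nlinarith [norm_nonneg (a • xs + b • y - xs)]
        )
    (convex_segment _ _) (left_mem_segment _ _ _) (right_mem_segment _ _ _)
  linarith [h]


lemma sham_pert {R : Type*} [NormedRing R] [CompleteSpace R]
    (u : Rˣ) (hβ : 0 < ‖(↑u⁻¹ : R)‖) (a : R)
    (h : ‖a - ↑u‖ ≤ 1 / (8 * ‖(↑u⁻¹ : R)‖)) :
    IsUnit a ∧ ‖Ring.inverse a‖ ≤ 2 * ‖(↑u⁻¹ : R)‖ := by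
  set β := ‖(↑u⁻¹ : R)‖ with hβdef
  have hlt : ‖a - ↑u‖ < β⁻¹ := lt_of_le_of_lt h (by
    rw [one_div]
    exact inv_strictAnti₀ (by positivity) (by nlinarith))
  set v := u.ofNearby a hlt with hvdef
  have hv : (↑v : R) = a := rfl
  refine ⟨⟨v, hv⟩, ?_⟩
  have hinv : Ring.inverse a = (↑v⁻¹ : R) := by rw [← hv, Ring.inverse_unit]
  rw [hinv]
  have h1 : (↑v⁻¹ : R) * ↑u = 1 - ↑v⁻¹ * (a - ↑u) := by
    have : (↑v⁻¹ : R) * a = 1 := by rw [← hv]; exact v.inv_mul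
    rw [mul_sub, this, sub_sub_cancel]
  have h2 : (↑v⁻¹ : R) = ↑u⁻¹ - ↑v⁻¹ * (a - ↑u) * ↑u⁻¹ := by
    calc (↑v⁻¹ : R) = (↑v⁻¹ * ↑u) * ↑u⁻¹ := by rw [mul_assoc, u.mul_inv, mul_one]
      _ = (1 - ↑v⁻¹ * (a - ↑u)) * ↑u⁻¹ := by rw [h1]
      _ = ↑u⁻¹ - ↑v⁻¹ * (a - ↑u) * ↑u⁻¹ := by rw [sub_mul, one_mul]
  have hb : ‖(↑v⁻¹ : R)‖ ≤ β + ‖(↑v⁻¹ : R)‖ * ‖a - ↑u‖ * β := by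
    calc ‖(↑v⁻¹ : R)‖ = ‖(↑u⁻¹ : R) - ↑v⁻¹ * (a - ↑u) * ↑u⁻¹‖ := by rw [← h2]
      _ ≤ β + ‖(↑v⁻¹ : R) * (a - ↑u) * ↑u⁻¹‖ := norm_sub_le _ _
      _ ≤ β + ‖(↑v⁻¹ : R) * (a - ↑u)‖ * β := by
          have := norm_mul_le ((↑v⁻¹ : R) * (a - ↑u)) (↑u⁻¹ : R)
          linarith
      _ ≤ β + ‖(↑v⁻¹ : R)‖ * ‖a - ↑u‖ * β := by
          have := norm_mul_le (↑v⁻¹ : R) (a - ↑u)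
          nlinarith [norm_nonneg ((↑v⁻¹:R))]
  have hsmall : ‖(↑v⁻¹ : R)‖ * ‖a - ↑u‖ * β ≤ ‖(↑v⁻¹ : R)‖ / 8 := by
    have h8 : ‖a - ↑u‖ * β ≤ 1/8 := by
      have h' := mul_le_mul_of_nonneg_right h (le_of_lt hβ)
      have he : 1 / (8 * β) * β = 1/8 := by field_simp
      linarith
    nlinarith [norm_nonneg ((↑v⁻¹:R)), norm_nonneg (a - ↑u)]
  nlinarith [norm_nonneg ((↑v⁻¹:R))]

lemma sham_chord {n : ℕ}
    (F : EuclideanSpace ℝ (Fin n) → EuclideanSpace ℝ (Fin n))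
    (J : EuclideanSpace ℝ (Fin n) →
      (EuclideanSpace ℝ (Fin n) →L[ℝ] EuclideanSpace ℝ (Fin n)))
    (hJ : ∀ x, HasFDerivAt F (J x) x)
    (xs : EuclideanSpace ℝ (Fin n)) (hroot : F xs = 0)
    (γ : ℝ) (hγ : 0 < γ)
    (hLip : ∀ x y, ‖J x - J y‖ ≤ γ * ‖x - y‖)
    (β : ℝ) (hβ : 0 < β)
    (x : EuclideanSpace ℝ (Fin n)) (hA : IsUnit (J x))
    (hB : ‖Ring.inverse (J x)‖ ≤ 2 * β)
    (hq : 4 * β * γ * ‖x - xs‖ ≤ 1 / 2) :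
    ∀ k : ℕ, ‖chordIter F (J x) x k - xs‖ ≤ (4 * β * γ * ‖x - xs‖) ^ k * ‖x - xs‖ := by
  set d := ‖x - xs‖ with hddef
  have hd0 : 0 ≤ d := norm_nonneg _
  set q := 4 * β * γ * d with hqdef
  have hq0 : 0 ≤ q := by positivity
  have hBinv : (J x).inverse = Ring.inverse (J x) :=
    (congrFun ContinuousLinearMap.ringInverse_eq_inverse (J x)).symm
  have hBA : ∀ w : EuclideanSpace ℝ (Fin n), (Ring.inverse (J x)) ((J x) w) = w := by
    intro w
    obtain ⟨v, hv⟩ := hA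
    rw [← hv, Ring.inverse_unit]
    have : ((↑v⁻¹ : EuclideanSpace ℝ (Fin n) →L[ℝ] EuclideanSpace ℝ (Fin n)) *
        (↑v : EuclideanSpace ℝ (Fin n) →L[ℝ] EuclideanSpace ℝ (Fin n))) w = w := by
      rw [v.inv_mul]; exact ContinuousLinearMap.one_apply w
    exact this
  intro k
  induction k with
  | zero => simp [chordIter, hddef]
  | succ k ih =>
    have hqk1 : q ^ k ≤ 1 := pow_le_one₀ hq0 (by linarith)
    have hek : ‖chordIter F (J x) x k - xs‖ ≤ d :=
      ih.trans (by nlinarith)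
    set y := chordIter F (J x) x k with hydef
    have hid : chordIter F (J x) x (k + 1) - xs
        = Ring.inverse (J x) ((J x) (y - xs) - F y) := by
      have h1 : chordIter F (J x) x (k + 1) = y - (J x).inverse (F y) := rfl
      rw [h1, hBinv, map_sub, hBA]
      abel
    have hmv := sham_mv F J hJ γ hγ hLip xs x y
    rw [hroot, sub_zero] at hmv
    have hFy : ‖(J x) (y - xs) - F y‖ ≤ γ * 2 * d * ‖y - xs‖ := by
      have : (J x) (y - xs) - F y = -(F y - (J x) (y - xs)) := by abel
      rw [this, norm_neg]
      calc ‖F y - (J x) (y - xs)‖ ≤ γ * (‖y - xs‖ + d) * ‖y - xs‖ := hmv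
        _ ≤ γ * 2 * d * ‖y - xs‖ := by nlinarith [mul_nonneg (mul_nonneg hγ.le (sub_nonneg.2 hek)) (norm_nonneg (y - xs))]
    calc ‖chordIter F (J x) x (k + 1) - xs‖
        = ‖Ring.inverse (J x) ((J x) (y - xs) - F y)‖ := by rw [hid]
      _ ≤ ‖Ring.inverse (J x)‖ * ‖(J x) (y - xs) - F y‖ :=
          ContinuousLinearMap.le_opNorm _ _
      _ ≤ (2 * β) * (γ * 2 * d * ‖y - xs‖) := by
          apply mul_le_mul hB hFy (norm_nonneg _) (by linarith)
      _ = q * ‖y - xs‖ := by rw [hqdef]; ring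
      _ ≤ q * (q ^ k * d) := by
          exact mul_le_mul_of_nonneg_left ih hq0
      _ = q ^ (k + 1) * d := by ring

theorem shamanskii_convergence_order (n : ℕ)
    (F : EuclideanSpace ℝ (Fin n) → EuclideanSpace ℝ (Fin n))
    (J : EuclideanSpace ℝ (Fin n) →
      (EuclideanSpace ℝ (Fin n) →L[ℝ] EuclideanSpace ℝ (Fin n)))
    (hJ : ∀ x, HasFDerivAt F (J x) x)
    (xs : EuclideanSpace ℝ (Fin n)) (hroot : F xs = 0)
    (γ : ℝ) (hγ : 0 < γ)
    (hLip : ∀ x y, ‖J x - J y‖ ≤ γ * ‖x - y‖)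
    (hpos : ∀ v : EuclideanSpace ℝ (Fin n), v ≠ 0 → 0 < ⟪v, (J xs) v⟫)
    (m : ℕ) (hm : 1 ≤ m) :
    ∃ K > (0 : ℝ), ∃ δ > (0 : ℝ),
      ∀ x₀ : EuclideanSpace ℝ (Fin n), ‖x₀ - xs‖ ≤ δ →
        (∀ j : ℕ,
            IsUnit (J ((shamanskii m F J)^[j] x₀)) ∧
            ‖(shamanskii m F J)^[j] x₀ - xs‖ ≤ δ ∧
            ‖(shamanskii m F J)^[j + 1] x₀ - xs‖ ≤
              K * ‖(shamanskii m F J)^[j] x₀ - xs‖ ^ (m + 1)) ∧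
        Filter.Tendsto (fun j => (shamanskii m F J)^[j] x₀) Filter.atTop (nhds xs) := by
  by_cases hsub : Subsingleton (EuclideanSpace ℝ (Fin n))
  · haveI := hsub
    haveI : Subsingleton (EuclideanSpace ℝ (Fin n) →L[ℝ] EuclideanSpace ℝ (Fin n)) :=
      ⟨fun f g => ContinuousLinearMap.ext fun v => Subsingleton.elim _ _⟩
    have hz : ∀ z : EuclideanSpace ℝ (Fin n), z - xs = 0 := fun z => Subsingleton.elim _ _
    refine ⟨1, one_pos, 1, one_pos, fun x₀ hx₀ =>
      ⟨fun j => ⟨isUnit_of_subsingleton _, ?_, ?_⟩, ?_⟩⟩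
    · rw [hz]; simp
    · rw [hz, hz]; simp
    · have : (fun j => (shamanskii m F J)^[j] x₀) = fun _ => xs :=
        funext fun j => Subsingleton.elim _ _
      rw [this]; exact tendsto_const_nhds
  · haveI : Nontrivial (EuclideanSpace ℝ (Fin n)) := not_subsingleton_iff_nontrivial.mp hsub
    -- J xs is a unit
    have hinj : Function.Injective (J xs) := by
      intro a b h
      by_contra hne
      have h0 := hpos (a - b) (sub_ne_zero.2 hne)
      rw [map_sub, h, sub_self, inner_zero_right] at h0
      exact lt_irrefl 0 h0
    have hsurj : Function.Surjective (J xs) := by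
      have := LinearMap.injective_iff_surjective
        (f := ((J xs) : EuclideanSpace ℝ (Fin n) →ₗ[ℝ] EuclideanSpace ℝ (Fin n)))
      exact this.mp hinj
    have hu0 : IsUnit (J xs) := ContinuousLinearMap.isUnit_iff_bijective.mpr ⟨hinj, hsurj⟩
    obtain ⟨u, hu⟩ := hu0
    set β := ‖((↑u⁻¹ : EuclideanSpace ℝ (Fin n) →L[ℝ] EuclideanSpace ℝ (Fin n)))‖ with hβdef
    have hβ : 0 < β := by
      rw [hβdef, norm_pos_iff]
      intro h0
      have h1 : (1 : EuclideanSpace ℝ (Fin n) →L[ℝ] EuclideanSpace ℝ (Fin n)) = 0 := by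
        rw [← u.inv_mul, h0, zero_mul]
      obtain ⟨v, hv⟩ := exists_ne (0 : EuclideanSpace ℝ (Fin n))
      apply hv
      have := congrArg (fun (f : EuclideanSpace ℝ (Fin n) →L[ℝ] EuclideanSpace ℝ (Fin n)) => f v) h1
      simpa using this
    set δ := 1 / (8 * β * γ) with hδdef
    have hδ : 0 < δ := by positivity
    set K := (4 * β * γ) ^ m with hKdef
    have hK : 0 < K := by positivity
    -- one-step lemma
    have hstep : ∀ x : EuclideanSpace ℝ (Fin n), ‖x - xs‖ ≤ δ →
        IsUnit (J x) ∧
        ‖shamanskii m F J x - xs‖ ≤ K * ‖x - xs‖ ^ (m + 1) ∧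
        ‖shamanskii m F J x - xs‖ ≤ (1 / 2) * ‖x - xs‖ := by
      intro x hx
      have hnear : ‖J x - ↑u‖ ≤ 1 / (8 * β) := by
        rw [hu]
        calc ‖J x - J xs‖ ≤ γ * ‖x - xs‖ := hLip x xs
          _ ≤ γ * δ := by nlinarith
          _ = 1 / (8 * β) := by rw [hδdef]; field_simp
      obtain ⟨hunit, hBnorm⟩ := sham_pert u hβ (J x) hnear
      have hq : 4 * β * γ * ‖x - xs‖ ≤ 1 / 2 := by
        have : 4 * β * γ * δ = 1 / 2 := by rw [hδdef]; field_simp; ring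
        nlinarith
      have hchord := sham_chord F J hJ xs hroot γ hγ hLip β hβ x hunit hBnorm hq m
      have hq0 : 0 ≤ 4 * β * γ * ‖x - xs‖ := by positivity
      refine ⟨hunit, ?_, ?_⟩
      · calc ‖shamanskii m F J x - xs‖
            ≤ (4 * β * γ * ‖x - xs‖) ^ m * ‖x - xs‖ := hchord
          _ = K * ‖x - xs‖ ^ (m + 1) := by rw [hKdef, mul_pow]; ring
      · calc ‖shamanskii m F J x - xs‖
            ≤ (4 * β * γ * ‖x - xs‖) ^ m * ‖x - xs‖ := hchord
          _ ≤ (1 / 2) ^ m * ‖x - xs‖ := by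
              apply mul_le_mul_of_nonneg_right (pow_le_pow_left₀ hq0 hq m) (norm_nonneg _)
          _ ≤ (1 / 2) * ‖x - xs‖ := by
              apply mul_le_mul_of_nonneg_right _ (norm_nonneg _)
              calc ((1:ℝ) / 2) ^ m ≤ (1 / 2) ^ 1 :=
                pow_le_pow_of_le_one (by norm_num) (by norm_num) hm
                _ = 1 / 2 := pow_one _
      
    refine ⟨K, hK, δ, hδ, ?_⟩
    intro x₀ hx₀
    have hiter : ∀ j : ℕ, ‖(shamanskii m F J)^[j] x₀ - xs‖ ≤ (1 / 2) ^ j * ‖x₀ - xs‖ := by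
      intro j
      induction j with
      | zero => simp
      | succ j ih =>
        have hle1 : ((1:ℝ) / 2) ^ j ≤ 1 := pow_le_one₀ (by norm_num) (by norm_num)
        have hball : ‖(shamanskii m F J)^[j] x₀ - xs‖ ≤ δ := by
          calc ‖(shamanskii m F J)^[j] x₀ - xs‖ ≤ (1/2)^j * ‖x₀ - xs‖ := ih
            _ ≤ δ := by nlinarith [norm_nonneg (x₀ - xs)]
        rw [Function.iterate_succ_apply']
        calc ‖shamanskii m F J ((shamanskii m F J)^[j] x₀) - xs‖
            ≤ (1/2) * ‖(shamanskii m F J)^[j] x₀ - xs‖ := (hstep _ hball).2.2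
          _ ≤ (1/2) * ((1/2)^j * ‖x₀ - xs‖) := by linarith
          _ = (1/2) ^ (j+1) * ‖x₀ - xs‖ := by ring
    have hball : ∀ j : ℕ, ‖(shamanskii m F J)^[j] x₀ - xs‖ ≤ δ := by
      intro j
      have hle1 : ((1:ℝ) / 2) ^ j ≤ 1 := pow_le_one₀ (by norm_num) (by norm_num)
      calc ‖(shamanskii m F J)^[j] x₀ - xs‖ ≤ (1/2)^j * ‖x₀ - xs‖ := hiter j
        _ ≤ δ := by nlinarith [norm_nonneg (x₀ - xs)]
    refine ⟨fun j => ⟨(hstep _ (hball j)).1, hball j, ?_⟩, ?_⟩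
    · rw [Function.iterate_succ_apply']
      exact (hstep _ (hball j)).2.1
    · rw [tendsto_iff_norm_sub_tendsto_zero]
      apply squeeze_zero (fun j => norm_nonneg _) hiter
      have : Filter.Tendsto (fun j : ℕ => ((1:ℝ)/2) ^ j * ‖x₀ - xs‖) Filter.atTop (nhds (0 * ‖x₀ - xs‖)) :=
        (tendsto_pow_atTop_nhds_zero_of_lt_one (by norm_num) (by norm_num)).mul_const _
      simpa using this
end

section
/- For every integer m ≥ 1 there exist K > 0 and δ > 0 with K·δ^m < 1 such that if ‖x₀ − x*‖ ≤ δ, then the Shamanskii iterates x^{(j+1)} = S_m(x^{(j)}) are well defined for all j and the sequence (x^{(j)}) converges to x*. -/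
set_option maxHeartbeats 1000000
set_option synthInstance.maxHeartbeats 1000000


open scoped RealInnerProductSpace

theorem shamanskii_convergence (n : ℕ)
    (F : EuclideanSpace ℝ (Fin n) → EuclideanSpace ℝ (Fin n))
    (J : EuclideanSpace ℝ (Fin n) →
      (EuclideanSpace ℝ (Fin n) →L[ℝ] EuclideanSpace ℝ (Fin n)))
    (hJ : ∀ x, HasFDerivAt F (J x) x)
    (xs : EuclideanSpace ℝ (Fin n)) (hroot : F xs = 0)
    (γ : ℝ) (hγ : 0 < γ)
    (hLip : ∀ x y, ‖J x - J y‖ ≤ γ * ‖x - y‖)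
    (hpos : ∀ v : EuclideanSpace ℝ (Fin n), v ≠ 0 → 0 < ⟪v, (J xs) v⟫)
    (m : ℕ) (hm : 1 ≤ m) :
    ∃ K > (0 : ℝ), ∃ δ > (0 : ℝ), K * δ ^ m < 1 ∧
      ∀ x₀ : EuclideanSpace ℝ (Fin n), ‖x₀ - xs‖ ≤ δ →
        (∀ j : ℕ, IsUnit (J ((shamanskii m F J)^[j] x₀))) ∧
        Filter.Tendsto (fun j => (shamanskii m F J)^[j] x₀) Filter.atTop (nhds xs) := by
  classical
  let E := EuclideanSpace ℝ (Fin n)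
  -- J xs is invertible
  have hinj : Function.Injective (J xs) := by
    intro v w hvw
    by_contra hne
    have hd : v - w ≠ 0 := sub_ne_zero.mpr hne
    have h0 : (J xs) (v - w) = 0 := by rw [map_sub, hvw, sub_self]
    have := hpos (v - w) hd
    rw [h0] at this
    simp at this
  have hsurj : Function.Surjective (J xs) :=
    LinearMap.injective_iff_surjective.mp hinj
  let e : E ≃ₗ[ℝ] E := LinearEquiv.ofBijective ((J xs) : E →ₗ[ℝ] E) ⟨hinj, hsurj⟩
  let ec : E ≃L[ℝ] E := e.toContinuousLinearEquiv
  have hec : (ec : E →L[ℝ] E) = J xs := by ext v; rfl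
  have hu0 : IsUnit (J xs) := by
    refine ⟨ec.toUnit, ?_⟩
    simpa [ContinuousLinearEquiv.toUnit] using hec
  -- continuity of the inverse
  have hJcont : Continuous J := by
    have : LipschitzWith γ.toNNReal J := by
      apply LipschitzWith.of_dist_le_mul
      intro x y
      rw [dist_eq_norm, dist_eq_norm]
      calc ‖J x - J y‖ ≤ γ * ‖x - y‖ := hLip x y
        _ = (γ.toNNReal : ℝ) * ‖x - y‖ := by rw [Real.coe_toNNReal γ hγ.le]
    exact this.continuous
  obtain ⟨u, hu⟩ := hu0
  have hcontinv : ContinuousAt (fun x => Ring.inverse (J x)) xs := by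
    have h1 : ContinuousAt Ring.inverse (J xs) := by
      rw [← hu]; exact NormedRing.inverse_continuousAt u
    exact h1.comp hJcont.continuousAt
  set β : ℝ := ‖Ring.inverse (J xs)‖ with hβ
  -- a neighborhood where J is invertible with bounded inverse
  have hV : ∀ᶠ x in nhds xs, IsUnit (J x) ∧ ‖Ring.inverse (J x)‖ < β + 1 := by
    have h1 : ∀ᶠ x in nhds xs, IsUnit (J x) := by
      have : IsOpen {A : E →L[ℝ] E | IsUnit A} := Units.isOpen
      exact hJcont.continuousAt.preimage_mem_nhds
        (this.mem_nhds (by exact ⟨u, hu⟩))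
    have h2 : ∀ᶠ x in nhds xs, ‖Ring.inverse (J x)‖ < β + 1 := by
      have : ContinuousAt (fun x => ‖Ring.inverse (J x)‖) xs := hcontinv.norm
      exact this.eventually_lt continuousAt_const (by simp [hβ])
    exact h1.and h2
  obtain ⟨ε, hε, hball⟩ := Metric.eventually_nhds_iff_ball.mp hV
  have hβ1 : (0:ℝ) < β + 1 := by positivity
  set δ : ℝ := min (ε / 2) (1 / (4 * γ * (β + 1))) with hδdef
  have hδpos : 0 < δ := lt_min (by linarith) (by positivity)
  have hδε : δ < ε := lt_of_le_of_lt (min_le_left _ _) (by linarith)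
  have hδsmall : δ ≤ 1 / (4 * γ * (β + 1)) := min_le_right _ _
  -- membership in the good set
  have hgood : ∀ x : E, ‖x - xs‖ ≤ δ → IsUnit (J x) ∧ ‖Ring.inverse (J x)‖ < β + 1 := by
    intro x hx
    apply hball
    rw [Metric.mem_ball, dist_eq_norm]
    exact lt_of_le_of_lt hx hδε
  -- Taylor estimate
  have htaylor : ∀ y : E, ‖F y - F xs - (J xs) (y - xs)‖ ≤ γ * ‖y - xs‖ * ‖y - xs‖ := by
    intro y
    have hconv : Convex ℝ (segment ℝ xs y) := convex_segment _ _
    have hderiv : ∀ z ∈ segment ℝ xs y, HasFDerivWithinAt F (J z) (segment ℝ xs y) z :=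
      fun z _ => (hJ z).hasFDerivWithinAt
    have hbound : ∀ z ∈ segment ℝ xs y, ‖J z - J xs‖ ≤ γ * ‖y - xs‖ := by
      intro z hz
      refine (hLip z xs).trans ?_
      have : ‖z - xs‖ ≤ ‖y - xs‖ := by
        rw [segment_eq_image'] at hz
        obtain ⟨t, ht, rfl⟩ := hz
        rw [add_sub_cancel_left, norm_smul]
        calc |t| * ‖y - xs‖ ≤ 1 * ‖y - xs‖ := by
              apply mul_le_mul_of_nonneg_right _ (norm_nonneg _)
              rw [abs_le]; constructor <;> linarith [ht.1, ht.2]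
          _ = ‖y - xs‖ := one_mul _
      exact mul_le_mul_of_nonneg_left this hγ.le
    exact hconv.norm_image_sub_le_of_norm_hasFDerivWithin_le' hderiv hbound
      (left_mem_segment ℝ xs y) (right_mem_segment ℝ xs y)
  -- the key one-step contraction
  have key : ∀ x y : E, ‖x - xs‖ ≤ δ → ‖y - xs‖ ≤ δ →
      ‖(y - (J x).inverse (F y)) - xs‖ ≤ (1/2 : ℝ) * ‖y - xs‖ := by
    intro x y hx hy
    obtain ⟨hux, hnx⟩ := hgood x hx
    set B : E →L[ℝ] E := Ring.inverse (J x) with hB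
    have hBinv : (J x).inverse = B := by
      rw [hB, ContinuousLinearMap.ringInverse_eq_inverse]
    have hmul : B * (J x) = 1 := Ring.inverse_mul_cancel _ hux
    -- the algebraic identity
    have hid : (y - (J x).inverse (F y)) - xs = B ((J x) (y - xs) - F y) := by
      rw [hBinv, map_sub]
      have : B ((J x) (y - xs)) = y - xs := by
        have := congrArg (fun T : E →L[ℝ] E => T (y - xs)) hmul
        simpa [ContinuousLinearMap.mul_apply] using this
      rw [this]
      abel
    -- the residual bound
    have hres : ‖(J x) (y - xs) - F y‖ ≤ 2 * γ * δ * ‖y - xs‖ := by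
      have h1 : (J x) (y - xs) - F y =
          -((F y - F xs - (J xs) (y - xs)) + ((J xs - J x) (y - xs))) := by
        simp only [hroot, sub_zero, ContinuousLinearMap.sub_apply]
        abel
      rw [h1, norm_neg]
      calc ‖(F y - F xs - (J xs) (y - xs)) + ((J xs - J x) (y - xs))‖
          ≤ ‖F y - F xs - (J xs) (y - xs)‖ + ‖(J xs - J x) (y - xs)‖ := norm_add_le _ _
        _ ≤ γ * ‖y - xs‖ * ‖y - xs‖ + ‖J xs - J x‖ * ‖y - xs‖ := by
            gcongr
            · exact htaylor y
            · exact ContinuousLinearMap.le_opNorm _ _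
        _ ≤ γ * δ * ‖y - xs‖ + (γ * δ) * ‖y - xs‖ := by
            have h2 : γ * ‖y - xs‖ ≤ γ * δ := mul_le_mul_of_nonneg_left hy hγ.le
            have h3 : ‖J xs - J x‖ ≤ γ * δ := by
              calc ‖J xs - J x‖ ≤ γ * ‖xs - x‖ := hLip xs x
                _ = γ * ‖x - xs‖ := by rw [norm_sub_rev]
                _ ≤ γ * δ := mul_le_mul_of_nonneg_left hx hγ.le
            gcongr
        _ = 2 * γ * δ * ‖y - xs‖ := by ring
    calc ‖(y - (J x).inverse (F y)) - xs‖ = ‖B ((J x) (y - xs) - F y)‖ := by rw [hid]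
      _ ≤ ‖B‖ * ‖(J x) (y - xs) - F y‖ := ContinuousLinearMap.le_opNorm _ _
      _ ≤ (β + 1) * (2 * γ * δ * ‖y - xs‖) := by
          apply mul_le_mul hnx.le hres (norm_nonneg _) hβ1.le
      _ = ((β + 1) * (2 * γ) * δ) * ‖y - xs‖ := by ring
      _ ≤ (1/2 : ℝ) * ‖y - xs‖ := by
          gcongr ?_ * _
          have h4 : (0:ℝ) < 4 * γ * (β + 1) := by positivity
          calc (β + 1) * (2 * γ) * δ ≤ (β + 1) * (2 * γ) * (1 / (4 * γ * (β + 1))) := by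
                apply mul_le_mul_of_nonneg_left hδsmall (by positivity)
            _ = 1/2 := by field_simp; ring
  -- inner chord iteration estimate
  have hchord : ∀ x : E, ‖x - xs‖ ≤ δ → ∀ k : ℕ,
      ‖chordIter F (J x) x k - xs‖ ≤ (1/2 : ℝ) ^ k * ‖x - xs‖ := by
    intro x hx k
    induction k with
    | zero => simp [chordIter]
    | succ k ih =>
      have hyk : ‖chordIter F (J x) x k - xs‖ ≤ δ := by
        refine ih.trans ?_
        calc (1/2 : ℝ) ^ k * ‖x - xs‖ ≤ 1 * ‖x - xs‖ := by
              apply mul_le_mul_of_nonneg_right _ (norm_nonneg _)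
              exact pow_le_one₀ (by norm_num) (by norm_num)
          _ = ‖x - xs‖ := one_mul _
          _ ≤ δ := hx
      calc ‖chordIter F (J x) x (k+1) - xs‖
          ≤ (1/2 : ℝ) * ‖chordIter F (J x) x k - xs‖ := key x _ hx hyk
        _ ≤ (1/2 : ℝ) * ((1/2 : ℝ) ^ k * ‖x - xs‖) := by
            apply mul_le_mul_of_nonneg_left ih (by norm_num)
        _ = (1/2 : ℝ) ^ (k+1) * ‖x - xs‖ := by ring
  -- shamanskii contraction
  have hsham : ∀ x : E, ‖x - xs‖ ≤ δ →
      ‖shamanskii m F J x - xs‖ ≤ (1/2 : ℝ) * ‖x - xs‖ := by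
    intro x hx
    calc ‖shamanskii m F J x - xs‖ ≤ (1/2 : ℝ) ^ m * ‖x - xs‖ := hchord x hx m
      _ ≤ (1/2 : ℝ) ^ 1 * ‖x - xs‖ := by
          apply mul_le_mul_of_nonneg_right _ (norm_nonneg _)
          exact pow_le_pow_of_le_one (by norm_num) (by norm_num) hm
      _ = (1/2 : ℝ) * ‖x - xs‖ := by ring
  refine ⟨(2 * δ)⁻¹ ^ m, pow_pos (by positivity) m, δ, hδpos, ?_, ?_⟩
  · have : (2 * δ)⁻¹ ^ m * δ ^ m = (1/2 : ℝ) ^ m := by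
      rw [← mul_pow]
      congr 1
      field_simp
    rw [this]
    exact pow_lt_one₀ (by norm_num) (by norm_num) (by omega)
  · intro x₀ hx₀
    have hiter : ∀ j : ℕ, ‖(shamanskii m F J)^[j] x₀ - xs‖ ≤ (1/2 : ℝ) ^ j * δ := by
      intro j
      induction j with
      | zero => simpa using hx₀
      | succ j ih =>
        have hjδ : ‖(shamanskii m F J)^[j] x₀ - xs‖ ≤ δ := by
          refine ih.trans ?_
          calc (1/2 : ℝ) ^ j * δ ≤ 1 * δ := by
                apply mul_le_mul_of_nonneg_right _ hδpos.le
                exact pow_le_one₀ (by norm_num) (by norm_num)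
            _ = δ := one_mul _
        rw [Function.iterate_succ_apply']
        calc ‖shamanskii m F J ((shamanskii m F J)^[j] x₀) - xs‖
            ≤ (1/2 : ℝ) * ‖(shamanskii m F J)^[j] x₀ - xs‖ := hsham _ hjδ
          _ ≤ (1/2 : ℝ) * ((1/2 : ℝ) ^ j * δ) := by
              apply mul_le_mul_of_nonneg_left ih (by norm_num)
          _ = (1/2 : ℝ) ^ (j+1) * δ := by ring
    have hδj : ∀ j : ℕ, ‖(shamanskii m F J)^[j] x₀ - xs‖ ≤ δ := by
      intro j
      refine (hiter j).trans ?_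
      calc (1/2 : ℝ) ^ j * δ ≤ 1 * δ := by
            apply mul_le_mul_of_nonneg_right _ hδpos.le
            exact pow_le_one₀ (by norm_num) (by norm_num)
        _ = δ := one_mul _
    constructor
    · intro j
      exact (hgood _ (hδj j)).1
    · rw [tendsto_iff_norm_sub_tendsto_zero]
      have hgeo : Filter.Tendsto (fun j : ℕ => (1/2 : ℝ) ^ j * δ) Filter.atTop (nhds 0) := by
        have := tendsto_pow_atTop_nhds_zero_of_lt_one (by norm_num : (0:ℝ) ≤ 1/2)
          (by norm_num : (1/2 : ℝ) < 1)
        simpa using this.mul_const δ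
      exact squeeze_zero (fun j => norm_nonneg _) hiter hgeo
end

section
/- There exist constants K > 0 and δ > 0 such that for every x with ‖x − x*‖ ≤ δ, the single Shamanskii step is well defined (J(x) is invertible and all inner iterates y₀, …, y_m remain in the ball of radius δ around x*) and satisfies ‖S_m(x) − x*‖ ≤ K‖x − x*‖^{m+1}. -/
open scoped RealInnerProductSpace

lemma pert_lemma {R : Type*} [NormedRing R] [CompleteSpace R]
    (u : Rˣ) (B : ℝ) (hB : ‖(↑u⁻¹ : R)‖ + 1 ≤ B) (hone : ‖(1:R)‖ ≤ 1)
    (A : R) (hA : ‖A - ↑u‖ ≤ 1 / (2 * B)) : IsUnit A ∧ ‖Ring.inverse A‖ ≤ 2 * B := by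
  have hB1 : (1:ℝ) ≤ B := by have := norm_nonneg (↑u⁻¹ : R); linarith
  have hBpos : (0:ℝ) < B := lt_of_lt_of_le one_pos hB1
  set t : R := ↑u⁻¹ * (A - ↑u) with ht
  have hnt : ‖t‖ ≤ 1/2 := by
    calc ‖t‖ ≤ ‖(↑u⁻¹ : R)‖ * ‖A - ↑u‖ := norm_mul_le _ _
    _ ≤ B * (1/(2*B)) := by
        have h0 : ‖(↑u⁻¹ : R)‖ ≤ B := by linarith
        exact mul_le_mul h0 hA (norm_nonneg _) (le_of_lt hBpos)
    _ = 1/2 := by field_simp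
  have hnt1 : ‖-t‖ < 1 := by rw [norm_neg]; linarith
  have hw' : IsUnit ((1:R) + t) := by
    have := isUnit_one_sub_of_norm_lt_one hnt1
    rwa [sub_neg_eq_add] at this
  obtain ⟨w, hw⟩ := hw'
  have hAuw : A = ↑u * ↑w := by
    rw [hw, ht, mul_add, mul_one, ← mul_assoc, u.mul_inv, one_mul]; abel
  constructor
  · rw [hAuw, ← Units.val_mul]; exact (u * w).isUnit
  · have hinvA : Ring.inverse A = ↑w⁻¹ * ↑u⁻¹ := by
      rw [hAuw, ← Units.val_mul, Ring.inverse_unit, mul_inv_rev, Units.val_mul]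
    rw [hinvA]
    have hwinv : ‖(↑w⁻¹ : R)‖ ≤ 2 := by
      have h1 : (↑w⁻¹ : R) = Ring.inverse (1 - (-t)) := by
        rw [sub_neg_eq_add, ← hw, Ring.inverse_unit]
      have h2 := tsum_geometric_le_of_norm_lt_one (-t) hnt1
      rw [geom_series_eq_inverse (-t) hnt1] at h2
      rw [h1]
      refine le_trans h2 ?_
      have h3 : (1 - ‖-t‖)⁻¹ ≤ 2 := by
        rw [norm_neg]
        rw [inv_le_comm₀ (by linarith) (by norm_num)]
        linarith
      linarith
    calc ‖(↑w⁻¹ : R) * ↑u⁻¹‖ ≤ ‖(↑w⁻¹ : R)‖ * ‖(↑u⁻¹ : R)‖ := norm_mul_le _ _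
    _ ≤ 2 * B := by nlinarith [norm_nonneg (↑u⁻¹ : R), norm_nonneg (↑w⁻¹ : R)]

set_option maxHeartbeats 1000000 in
set_option synthInstance.maxHeartbeats 200000 in
theorem shamanskii_single_step (n : ℕ)
    (F : EuclideanSpace ℝ (Fin n) → EuclideanSpace ℝ (Fin n))
    (J : EuclideanSpace ℝ (Fin n) →
      (EuclideanSpace ℝ (Fin n) →L[ℝ] EuclideanSpace ℝ (Fin n)))
    (hJ : ∀ x, HasFDerivAt F (J x) x)
    (xs : EuclideanSpace ℝ (Fin n)) (hroot : F xs = 0)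
    (γ : ℝ) (hγ : 0 < γ)
    (hLip : ∀ x y, ‖J x - J y‖ ≤ γ * ‖x - y‖)
    (hpos : ∀ v : EuclideanSpace ℝ (Fin n), v ≠ 0 → 0 < ⟪v, (J xs) v⟫)
    (m : ℕ) (hm : 1 ≤ m) :
    ∃ K > (0 : ℝ), ∃ δ > (0 : ℝ),
      ∀ x : EuclideanSpace ℝ (Fin n), ‖x - xs‖ ≤ δ →
        IsUnit (J x) ∧
        (∀ k ≤ m, ‖chordIter F (J x) x k - xs‖ ≤ δ) ∧
        ‖shamanskii m F J x - xs‖ ≤ K * ‖x - xs‖ ^ (m + 1) := by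
  classical
  -- Taylor bound
  have htaylor : ∀ p y : EuclideanSpace ℝ (Fin n),
      ‖F y - F p - (J p) (y - p)‖ ≤ γ * ‖y - p‖ ^ 2 := by
    intro p y
    have h := Convex.norm_image_sub_le_of_norm_hasFDerivWithin_le'
      (f := F) (f' := J) (φ := J p) (s := Metric.closedBall p ‖y - p‖) (C := γ * ‖y - p‖)
      (x := p) (y := y)
      (fun z _ => (hJ z).hasFDerivWithinAt)
      (fun z hz => by
        refine le_trans (hLip z p) ?_
        have : ‖z - p‖ ≤ ‖y - p‖ := by
          simpa [dist_eq_norm] using Metric.mem_closedBall.mp hz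
        exact mul_le_mul_of_nonneg_left this (le_of_lt hγ))
      (convex_closedBall _ _)
      (Metric.mem_closedBall_self (norm_nonneg _))
      (by simp [Metric.mem_closedBall, dist_eq_norm])
    calc ‖F y - F p - (J p) (y - p)‖ ≤ γ * ‖y - p‖ * ‖y - p‖ := h
    _ = γ * ‖y - p‖ ^ 2 := by ring
  -- J xs is a unit
  have hustar : IsUnit (J xs) := by
    rw [ContinuousLinearMap.isUnit_iff_bijective]
    have hinj : Function.Injective (J xs) := by
      rw [injective_iff_map_eq_zero]
      intro v hv
      by_contra h
      have := hpos v h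
      rw [hv, inner_zero_right] at this
      exact lt_irrefl 0 this
    exact ⟨hinj, (LinearMap.injective_iff_surjective
      (f := (J xs : EuclideanSpace ℝ (Fin n) →ₗ[ℝ] EuclideanSpace ℝ (Fin n)))).mp hinj⟩
  obtain ⟨u, hu⟩ := hustar
  set B : ℝ := ‖(↑u⁻¹ : EuclideanSpace ℝ (Fin n) →L[ℝ] EuclideanSpace ℝ (Fin n))‖ + 1 with hBdef
  clear_value B
  have hB1 : (1:ℝ) ≤ B := by
    have := norm_nonneg (↑u⁻¹ : EuclideanSpace ℝ (Fin n) →L[ℝ] EuclideanSpace ℝ (Fin n))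
    rw [hBdef]; linarith
  have hBpos : (0:ℝ) < B := lt_of_lt_of_le one_pos hB1
  have hone : ‖(1 : EuclideanSpace ℝ (Fin n) →L[ℝ] EuclideanSpace ℝ (Fin n))‖ ≤ 1 := by
    simpa [ContinuousLinearMap.one_def] using
      (ContinuousLinearMap.norm_id_le (E := EuclideanSpace ℝ (Fin n)))
  refine ⟨(4*B*γ)^m, pow_pos (by nlinarith) m, 1/(8*B*γ), by positivity, ?_⟩
  intro x hx
  set d : ℝ := ‖x - xs‖ with hd
  clear_value d
  have hd0 : 0 ≤ d := hd ▸ norm_nonneg _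
  -- J x is a unit with controlled inverse
  have hpert := pert_lemma u B (le_of_eq hBdef.symm) hone (J x) (by
    rw [hu]
    have h8 : γ * (1/(8*B*γ)) = 1/(8*B) := by field_simp
    calc ‖J x - J xs‖ ≤ γ * ‖x - xs‖ := hLip x xs
    _ ≤ γ * (1/(8*B*γ)) := mul_le_mul_of_nonneg_left (hd ▸ hx) (le_of_lt hγ)
    _ = 1/(8*B) := h8
    _ ≤ 1/(2*B) := one_div_le_one_div_of_le (by positivity) (by nlinarith))
  obtain ⟨hunit, hinvB⟩ := hpert
  obtain ⟨v, hv⟩ := hunit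
  have hvinv_norm :
      ‖(↑v⁻¹ : EuclideanSpace ℝ (Fin n) →L[ℝ] EuclideanSpace ℝ (Fin n))‖ ≤ 2*B := by
    rw [← Ring.inverse_unit v, hv]; exact hinvB
  have hinv_eq : (J x).inverse
      = (↑v⁻¹ : EuclideanSpace ℝ (Fin n) →L[ℝ] EuclideanSpace ℝ (Fin n)) := by
    rw [← ContinuousLinearMap.ringInverse_eq_inverse, ← hv, Ring.inverse_unit]
  have hleft : ∀ z : EuclideanSpace ℝ (Fin n),
      (↑v⁻¹ : EuclideanSpace ℝ (Fin n) →L[ℝ] EuclideanSpace ℝ (Fin n)) ((J x) z) = z := by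
    have h1 : (↑v⁻¹ : EuclideanSpace ℝ (Fin n) →L[ℝ] EuclideanSpace ℝ (Fin n)) * (J x) = 1 := by
      rw [← hv, ← Units.val_mul]; simp
    intro z
    have h2 := congrArg
      (fun (T : EuclideanSpace ℝ (Fin n) →L[ℝ] EuclideanSpace ℝ (Fin n)) => T z) h1
    simpa [ContinuousLinearMap.mul_apply] using h2
  -- contraction factor
  have hq : 4*B*γ*d ≤ 1/2 := by
    have h1 : 4*B*γ*d ≤ 4*B*γ*(1/(8*B*γ)) :=
      mul_le_mul_of_nonneg_left hx (by positivity)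
    have h2 : 4*B*γ*(1/(8*B*γ)) = 1/2 := by field_simp; ring
    linarith
  have hq0 : 0 ≤ 4*B*γ*d := by positivity
  -- main induction
  have key : ∀ k, ‖chordIter F (J x) x k - xs‖ ≤ (4*B*γ*d)^k * d := by
    intro k
    induction k with
    | zero => simp only [chordIter, pow_zero, one_mul, ← hd]; exact le_refl d
    | succ k ih =>
      set y := chordIter F (J x) x k with hy
      set e : ℝ := ‖y - xs‖ with he
      have he0 : 0 ≤ e := norm_nonneg _
      have hP0 : 0 ≤ (4*B*γ*d)^k := pow_nonneg hq0 k
      have hP1 : (4*B*γ*d)^k ≤ 1 := pow_le_one₀ hq0 (by linarith)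
      have hed : e ≤ d := by
        calc e ≤ (4*B*γ*d)^k * d := ih
        _ ≤ 1 * d := mul_le_mul_of_nonneg_right hP1 hd0
        _ = d := one_mul d
      have hstep : chordIter F (J x) x (k+1) = y - (J x).inverse (F y) := rfl
      have hrepr : chordIter F (J x) x (k+1) - xs
          = (↑v⁻¹ : EuclideanSpace ℝ (Fin n) →L[ℝ] EuclideanSpace ℝ (Fin n))
              ((J x) (y - xs) - F y) := by
        rw [hstep, hinv_eq, map_sub, hleft]
        abel
      have hFy : ‖(J x) (y - xs) - F y‖ ≤ γ * e^2 + γ * d * e := by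
        have hsplit : (J x) (y - xs) - F y
            = -((F y - F xs - (J xs) (y - xs)) + ((J xs) (y - xs) - (J x) (y - xs))) := by
          rw [hroot]; abel
        rw [hsplit, norm_neg]
        refine le_trans (norm_add_le _ _) ?_
        have h1 : ‖F y - F xs - (J xs) (y - xs)‖ ≤ γ * e^2 := htaylor xs y
        have h2 : ‖(J xs) (y - xs) - (J x) (y - xs)‖ ≤ γ * d * e := by
          have h3 : (J xs) (y - xs) - (J x) (y - xs) = (J xs - J x) (y - xs) := by
            simp [ContinuousLinearMap.sub_apply]
          rw [h3]
          calc ‖(J xs - J x) (y - xs)‖ ≤ ‖J xs - J x‖ * e := (J xs - J x).le_opNorm _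
          _ ≤ (γ * ‖xs - x‖) * e := mul_le_mul_of_nonneg_right (hLip xs x) he0
          _ = γ * d * e := by rw [norm_sub_rev, ← hd]
        linarith
      calc ‖chordIter F (J x) x (k+1) - xs‖
          = ‖(↑v⁻¹ : EuclideanSpace ℝ (Fin n) →L[ℝ] EuclideanSpace ℝ (Fin n))
              ((J x) (y - xs) - F y)‖ := by rw [hrepr]
      _ ≤ ‖(↑v⁻¹ : EuclideanSpace ℝ (Fin n) →L[ℝ] EuclideanSpace ℝ (Fin n))‖
            * ‖(J x) (y - xs) - F y‖ := ContinuousLinearMap.le_opNorm _ _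
      _ ≤ (2*B) * (γ * e^2 + γ * d * e) :=
          mul_le_mul hvinv_norm hFy (norm_nonneg _) (by positivity)
      _ ≤ (4*B*γ*d)^(k+1) * d := by
          have hmul : (e + d) * e ≤ (2*d) * ((4*B*γ*d)^k * d) :=
            mul_le_mul (by linarith) ih he0 (by positivity)
          have expand : (2*B) * (γ * e^2 + γ * d * e) = 2*B*γ*((e+d)*e) := by ring
          have h5 : 2*B*γ*((e+d)*e) ≤ 2*B*γ*(2*d*((4*B*γ*d)^k*d)) :=
            mul_le_mul_of_nonneg_left hmul (by positivity)
          rw [expand, pow_succ]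
          calc 2*B*γ*((e+d)*e) ≤ 2*B*γ*(2*d*((4*B*γ*d)^k*d)) := h5
          _ = (4*B*γ*d)^k * (4*B*γ*d) * d := by ring
  have hiter : ∀ k ≤ m, ‖chordIter F (J x) x k - xs‖ ≤ 1/(8*B*γ) := by
    intro k _
    calc ‖chordIter F (J x) x k - xs‖ ≤ (4*B*γ*d)^k * d := key k
    _ ≤ 1 * d := mul_le_mul_of_nonneg_right (pow_le_one₀ hq0 (by linarith)) hd0
    _ = d := one_mul d
    _ ≤ 1/(8*B*γ) := hx
  refine ⟨⟨v, hv⟩, hiter, ?_⟩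
  calc ‖shamanskii m F J x - xs‖ ≤ (4*B*γ*d)^m * d := key m
  _ = (4*B*γ)^m * d^(m+1) := by rw [mul_pow, pow_succ]; ring
end

section
/- There exist constants C > 0 and δ > 0 such that for all x, y with ‖x − x*‖ ≤ δ and ‖y − x*‖ ≤ δ, the matrix J(x) is invertible and the chord step with Jacobian frozen at x satisfies ‖y − J(x)⁻¹F(y) − x*‖ ≤ C(‖x − x*‖ + ‖y − x*‖)‖y − x*‖. -/
open scoped RealInnerProductSpace

set_option maxHeartbeats 1000000 in
set_option synthInstance.maxHeartbeats 400000 in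
theorem chord_step_estimate (n : ℕ)
    (F : EuclideanSpace ℝ (Fin n) → EuclideanSpace ℝ (Fin n))
    (J : EuclideanSpace ℝ (Fin n) →
      (EuclideanSpace ℝ (Fin n) →L[ℝ] EuclideanSpace ℝ (Fin n)))
    (hJ : ∀ x, HasFDerivAt F (J x) x)
    (xs : EuclideanSpace ℝ (Fin n)) (hroot : F xs = 0)
    (γ : ℝ) (hγ : 0 < γ)
    (hLip : ∀ x y, ‖J x - J y‖ ≤ γ * ‖x - y‖)
    (hpos : ∀ v : EuclideanSpace ℝ (Fin n), v ≠ 0 → 0 < ⟪v, (J xs) v⟫) :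
    ∃ C > (0 : ℝ), ∃ δ > (0 : ℝ),
      ∀ x y : EuclideanSpace ℝ (Fin n), ‖x - xs‖ ≤ δ → ‖y - xs‖ ≤ δ →
        IsUnit (J x) ∧
        ‖y - (J x).inverse (F y) - xs‖ ≤ C * (‖x - xs‖ + ‖y - xs‖) * ‖y - xs‖ := by
  classical
  -- `J xs` is injective, hence a unit
  have hinj : Function.Injective (J xs) := by
    intro a b hab
    by_contra hne
    have h := hpos (a - b) (sub_ne_zero.mpr hne)
    rw [map_sub, hab, sub_self, inner_zero_right] at h
    exact lt_irrefl _ h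
  have hsurj : Function.Surjective (J xs) := by
    have : Function.Surjective ((J xs : EuclideanSpace ℝ (Fin n) →ₗ[ℝ] EuclideanSpace ℝ (Fin n))) := LinearMap.injective_iff_surjective.mp hinj
    exact this
  have hunit : IsUnit (J xs) := by
    let e := (LinearEquiv.ofBijective ((J xs) : EuclideanSpace ℝ (Fin n) →ₗ[ℝ] EuclideanSpace ℝ (Fin n))
      ⟨hinj, hsurj⟩).toContinuousLinearEquiv
    refine ⟨⟨J xs, e.symm.toContinuousLinearMap, ?_, ?_⟩, rfl⟩
    · refine ContinuousLinearMap.ext fun v => ?_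
      exact e.apply_symm_apply v
    · refine ContinuousLinearMap.ext fun v => ?_
      exact e.symm_apply_apply v
  -- continuity of `J` and of `x ↦ (J x)⁻¹`
  have hJcont : Continuous J := by
    have : LipschitzWith γ.toNNReal J :=
      LipschitzWith.of_dist_le_mul (fun a b => by
        rw [dist_eq_norm, dist_eq_norm, Real.coe_toNNReal γ hγ.le]; exact hLip a b)
    exact this.continuous
  have hcont : ContinuousAt (fun x => Ring.inverse (J x)) xs := by
    have h1 : ContinuousAt Ring.inverse (J xs) := by
      have := NormedRing.inverse_continuousAt hunit.unit
      rwa [IsUnit.unit_spec] at this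
    exact h1.comp hJcont.continuousAt
  set M : ℝ := ‖Ring.inverse (J xs)‖ + 1 with hM
  have hM0 : 0 ≤ M := by positivity
  -- eventually near `xs`: `J x` is a unit and its inverse has norm ≤ M
  have hU : ∀ᶠ x in nhds xs, IsUnit (J x) ∧ ‖Ring.inverse (J x)‖ ≤ M := by
    have h1 : ∀ᶠ x in nhds xs, IsUnit (J x) :=
      hJcont.continuousAt (Units.isOpen.mem_nhds hunit)
    have h2 : ∀ᶠ x in nhds xs,
        Ring.inverse (J x) ∈ Metric.ball (Ring.inverse (J xs)) 1 :=
      hcont (Metric.ball_mem_nhds _ one_pos)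
    filter_upwards [h1, h2] with x hx1 hx2
    refine ⟨hx1, ?_⟩
    have := le_of_lt (Metric.mem_ball.mp hx2)
    have h3 : ‖Ring.inverse (J x)‖ ≤
        ‖Ring.inverse (J x) - Ring.inverse (J xs)‖ + ‖Ring.inverse (J xs)‖ := by
      have h4 := norm_add_le (Ring.inverse (J x) - Ring.inverse (J xs)) (Ring.inverse (J xs))
      simpa using h4
    rw [dist_eq_norm] at this
    linarith
  obtain ⟨ε, hε, hball⟩ := Metric.eventually_nhds_iff_ball.mp hU
  refine ⟨γ * M, by positivity, ε / 2, by positivity, fun x y hx hy => ?_⟩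
  have hxball : x ∈ Metric.ball xs ε := by
    rw [Metric.mem_ball, dist_eq_norm]; linarith
  obtain ⟨hxu, hxM⟩ := hball x hxball
  refine ⟨hxu, ?_⟩
  -- mean value estimate on the segment from `xs` to `y`
  have key : ‖F y - F xs - (J x) (y - xs)‖ ≤ γ * (‖x - xs‖ + ‖y - xs‖) * ‖y - xs‖ := by
    refine Convex.norm_image_sub_le_of_norm_hasFDerivWithin_le'
      (fun z _ => (hJ z).hasFDerivWithinAt)
      (fun z hz => ?_) (convex_segment _ _) (left_mem_segment ℝ xs y)
      (right_mem_segment ℝ xs y)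
    obtain ⟨a, b, ha, hb, hab, hz⟩ := hz
    have hzxs : ‖z - xs‖ ≤ ‖y - xs‖ := by
      have : z - xs = b • (y - xs) := by
        rw [← hz]
        have : a = 1 - b := by linarith
        rw [this]
        module
      rw [this, norm_smul, Real.norm_of_nonneg hb]
      have hb1 : b ≤ 1 := by linarith
      calc b * ‖y - xs‖ ≤ 1 * ‖y - xs‖ := mul_le_mul_of_nonneg_right hb1 (norm_nonneg _)
        _ = ‖y - xs‖ := one_mul _
    calc ‖J z - J x‖ ≤ γ * ‖z - x‖ := hLip z x
      _ ≤ γ * (‖z - xs‖ + ‖x - xs‖) := by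
          have : ‖z - x‖ ≤ ‖z - xs‖ + ‖x - xs‖ := by
            have := norm_sub_le_norm_sub_add_norm_sub z xs x
            rw [norm_sub_rev xs x] at this
            exact this
          exact mul_le_mul_of_nonneg_left this hγ.le
      _ ≤ γ * (‖x - xs‖ + ‖y - xs‖) := by
          have : ‖z - xs‖ + ‖x - xs‖ ≤ ‖x - xs‖ + ‖y - xs‖ := by linarith
          exact mul_le_mul_of_nonneg_left this hγ.le
  -- algebraic identity for the chord step
  have hcomp : Ring.inverse (J x) * (J x) = 1 := Ring.inverse_mul_cancel _ hxu
  have hid : Ring.inverse (J x) ((J x) (y - xs)) = y - xs := by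
    have := congrArg (fun (A : EuclideanSpace ℝ (Fin n) →L[ℝ] EuclideanSpace ℝ (Fin n)) =>
      A (y - xs)) hcomp
    simpa using this
  have heq : y - (J x).inverse (F y) - xs = Ring.inverse (J x) ((J x) (y - xs) - F y) := by
    rw [← ContinuousLinearMap.ringInverse_eq_inverse, map_sub, hid]
    abel
  rw [heq]
  calc ‖Ring.inverse (J x) ((J x) (y - xs) - F y)‖
      ≤ ‖Ring.inverse (J x)‖ * ‖(J x) (y - xs) - F y‖ :=
        ContinuousLinearMap.le_opNorm _ _
    _ = ‖Ring.inverse (J x)‖ * ‖F y - F xs - (J x) (y - xs)‖ := by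
        rw [hroot, sub_zero, norm_sub_rev]
    _ ≤ M * (γ * (‖x - xs‖ + ‖y - xs‖) * ‖y - xs‖) := by
        apply mul_le_mul hxM key (norm_nonneg _) hM0
    _ = γ * M * (‖x - xs‖ + ‖y - xs‖) * ‖y - xs‖ := by ring
end

section
/- For every integer k ≥ 0 there exist constants K_k > 0 and δ > 0 such that for every x with ‖x − x*‖ ≤ δ, J(x) is invertible, the inner chord iterates y₀ = x, y_{i+1} = y_i − J(x)⁻¹F(y_i) remain in the ball of radius δ around x* for i = 0, …, k, and ‖y_k − x*‖ ≤ K_k ‖x − x*‖^{k+1}. -/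
open scoped RealInnerProductSpace

set_option maxHeartbeats 1000000 in
theorem chord_inner_iterates_estimate (n : ℕ)
    (F : EuclideanSpace ℝ (Fin n) → EuclideanSpace ℝ (Fin n))
    (J : EuclideanSpace ℝ (Fin n) →
      (EuclideanSpace ℝ (Fin n) →L[ℝ] EuclideanSpace ℝ (Fin n)))
    (hJ : ∀ x, HasFDerivAt F (J x) x)
    (xs : EuclideanSpace ℝ (Fin n)) (hroot : F xs = 0)
    (γ : ℝ) (hγ : 0 < γ)
    (hLip : ∀ x y, ‖J x - J y‖ ≤ γ * ‖x - y‖)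
    (hpos : ∀ v : EuclideanSpace ℝ (Fin n), v ≠ 0 → 0 < ⟪v, (J xs) v⟫) :
    ∀ k : ℕ, ∃ K > (0 : ℝ), ∃ δ > (0 : ℝ),
      ∀ x : EuclideanSpace ℝ (Fin n), ‖x - xs‖ ≤ δ →
        IsUnit (J x) ∧
        (∀ i ≤ k, ‖chordIter F (J x) x i - xs‖ ≤ δ) ∧
        ‖chordIter F (J x) x k - xs‖ ≤ K * ‖x - xs‖ ^ (k + 1) := by
  intro k
  rcases subsingleton_or_nontrivial (EuclideanSpace ℝ (Fin n)) with hsub | hnt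
  · -- trivial case
    refine ⟨1, one_pos, 1, one_pos, fun x hx => ?_⟩
    have hz : ∀ z : EuclideanSpace ℝ (Fin n), z = 0 := fun z => Subsingleton.elim z 0
    refine ⟨?_, ?_, ?_⟩
    · have : J x = 1 := Subsingleton.elim _ _
      rw [this]; exact isUnit_one
    · intro i _
      rw [hz (chordIter F (J x) x i - xs), norm_zero]; norm_num
    · rw [hz (chordIter F (J x) x k - xs), norm_zero]
      positivity
  -- J xs is invertible
  have hinj : Function.Injective (J xs) := by
    intro v w hvw
    by_contra hne
    have hsub : v - w ≠ 0 := sub_ne_zero.mpr hne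
    have h1 := hpos (v - w) hsub
    rw [map_sub, hvw, sub_self] at h1
    simp at h1
  have hsurj : Function.Surjective (J xs) :=
    LinearMap.injective_iff_surjective.mp hinj
  let e : EuclideanSpace ℝ (Fin n) ≃L[ℝ] EuclideanSpace ℝ (Fin n) :=
    (LinearEquiv.ofBijective ((J xs) : EuclideanSpace ℝ (Fin n) →ₗ[ℝ] EuclideanSpace ℝ (Fin n))
      ⟨hinj, hsurj⟩).toContinuousLinearEquiv
  let u : (EuclideanSpace ℝ (Fin n) →L[ℝ] EuclideanSpace ℝ (Fin n))ˣ :=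
    (ContinuousLinearEquiv.unitsEquiv ℝ _).symm e
  have hu : (u : EuclideanSpace ℝ (Fin n) →L[ℝ] EuclideanSpace ℝ (Fin n)) = J xs := by
    ext v; rfl
  set B : EuclideanSpace ℝ (Fin n) →L[ℝ] EuclideanSpace ℝ (Fin n) := ((u⁻¹ : _ˣ) :
    EuclideanSpace ℝ (Fin n) →L[ℝ] EuclideanSpace ℝ (Fin n)) with hBdef
  have hB1 : B * (J xs) = 1 := by rw [← hu]; exact u.inv_mul
  have hB2 : (J xs) * B = 1 := by rw [← hu]; exact u.mul_inv
  have hnontriv : Nontrivial (EuclideanSpace ℝ (Fin n) →L[ℝ] EuclideanSpace ℝ (Fin n)) := by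
    refine ⟨1, 0, fun h => ?_⟩
    obtain ⟨v, hv⟩ := exists_ne (0 : EuclideanSpace ℝ (Fin n))
    apply hv
    have := ContinuousLinearMap.ext_iff.mp h v
    simpa using this
  set β : ℝ := ‖B‖ with hβdef
  have hβ : 0 < β := by
    rw [hβdef, norm_pos_iff]
    intro h0
    have : (1 : EuclideanSpace ℝ (Fin n) →L[ℝ] EuclideanSpace ℝ (Fin n)) = 0 := by
      rw [← hB1, h0, zero_mul]
    exact one_ne_zero this
  set δ : ℝ := 1 / (4 * β * γ) with hδdef
  have hδ : 0 < δ := by positivity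
  have hγδ : γ * δ = 1 / (4 * β) := by rw [hδdef]; field_simp
  have hγδβ : γ * δ * β = 1 / 4 := by rw [hγδ]; field_simp
  have h4βγδ : 4 * β * γ * δ = 1 := by rw [hδdef]; field_simp
  refine ⟨(4 * β * γ) ^ k, by positivity, δ, hδ, fun x hx => ?_⟩
  -- J x is a unit
  have ht : ‖J x - J xs‖ ≤ γ * δ :=
    (hLip x xs).trans (by nlinarith [norm_nonneg (x - xs)])
  have hlt : ‖J x - (u : EuclideanSpace ℝ (Fin n) →L[ℝ] EuclideanSpace ℝ (Fin n))‖ <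
      ‖((u⁻¹ : _ˣ) : EuclideanSpace ℝ (Fin n) →L[ℝ] EuclideanSpace ℝ (Fin n))‖⁻¹ := by
    rw [hu, ← hBdef, ← hβdef]
    refine lt_of_le_of_lt ht ?_
    rw [hγδ]
    rw [one_div, inv_lt_inv₀ (by positivity) hβ]
    nlinarith
  have hJxUnit : IsUnit (J x) := ⟨u.ofNearby (J x) hlt, by simp⟩
  set Binv : EuclideanSpace ℝ (Fin n) →L[ℝ] EuclideanSpace ℝ (Fin n) :=
    Ring.inverse (J x) with hBinvdef
  have hBi1 : Binv * (J x) = 1 := Ring.inverse_mul_cancel _ hJxUnit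
  have hinv_eq : (J x).inverse = Binv := by
    rw [hBinvdef]
    exact (congrFun ContinuousLinearMap.ringInverse_eq_inverse (J x)).symm
  -- norm bound on Binv
  have hident : Binv = B - Binv * (J x - J xs) * B := by
    calc Binv = Binv * ((J xs) * B) := by rw [hB2, mul_one]
      _ = (Binv * (J x)) * B - Binv * (J x - J xs) * B := by
            simp only [sub_mul, mul_sub, mul_assoc]; abel
      _ = B - Binv * (J x - J xs) * B := by rw [hBi1, one_mul]
  have hBinv_norm : ‖Binv‖ ≤ 2 * β := by
    have h1 : ‖Binv‖ ≤ ‖B‖ + ‖Binv * (J x - J xs) * B‖ := by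
      conv_lhs => rw [hident]
      exact norm_sub_le _ _
    have h2 : ‖Binv * (J x - J xs) * B‖ ≤ ‖Binv‖ * ‖J x - J xs‖ * ‖B‖ := by
      calc ‖Binv * (J x - J xs) * B‖ ≤ ‖Binv * (J x - J xs)‖ * ‖B‖ := norm_mul_le _ _
        _ ≤ ‖Binv‖ * ‖J x - J xs‖ * ‖B‖ :=
            mul_le_mul_of_nonneg_right (norm_mul_le _ _) (norm_nonneg _)
    have h3 : ‖Binv‖ * ‖J x - J xs‖ * ‖B‖ ≤ ‖Binv‖ * (γ * δ) * β := by
      rw [hβdef]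
      exact mul_le_mul_of_nonneg_right
        (mul_le_mul_of_nonneg_left ht (norm_nonneg _)) (norm_nonneg _)
    nlinarith [norm_nonneg Binv, norm_nonneg B]
  -- mean value type estimate
  have hstep : ∀ y : EuclideanSpace ℝ (Fin n),
      ‖F y - F xs - (J x) (y - xs)‖ ≤ γ * (‖y - xs‖ + ‖x - xs‖) * ‖y - xs‖ := by
    intro y
    refine Convex.norm_image_sub_le_of_norm_hasFDerivWithin_le'
      (f' := J) (s := Metric.closedBall xs ‖y - xs‖)
      (fun z _ => (hJ z).hasFDerivWithinAt) (fun z hz => ?_)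
      (convex_closedBall _ _) (Metric.mem_closedBall_self (norm_nonneg _))
      (by simp [Metric.mem_closedBall, dist_eq_norm])
    have hz' : ‖z - xs‖ ≤ ‖y - xs‖ := by
      rwa [Metric.mem_closedBall, dist_eq_norm] at hz
    calc ‖J z - J x‖ ≤ γ * ‖z - x‖ := hLip z x
      _ ≤ γ * (‖y - xs‖ + ‖x - xs‖) := by
          have htri : ‖z - x‖ ≤ ‖z - xs‖ + ‖xs - x‖ := norm_sub_le_norm_sub_add_norm_sub _ _ _
          rw [norm_sub_rev xs x] at htri
          gcongr
          linarith
  -- main induction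
  have key : ∀ i : ℕ, ‖chordIter F (J x) x i - xs‖ ≤ ‖x - xs‖ ∧
      ‖chordIter F (J x) x i - xs‖ ≤ (4 * β * γ) ^ i * ‖x - xs‖ ^ (i + 1) := by
    intro i
    induction i with
    | zero => simp [chordIter]
    | succ i ih =>
      set y := chordIter F (J x) x i with hy
      have hid : Binv ((J x) (y - xs)) = y - xs := by
        have := congrArg (fun f : EuclideanSpace ℝ (Fin n) →L[ℝ] EuclideanSpace ℝ (Fin n)
          => f (y - xs)) hBi1
        simpa using this
      have hrec : chordIter F (J x) x (i + 1) - xs = -(Binv (F y - F xs - (J x) (y - xs))) := by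
        show y - (J x).inverse (F y) - xs = _
        rw [hinv_eq, hroot, map_sub, map_sub, map_zero, hid]
        abel
      have hnorm : ‖chordIter F (J x) x (i + 1) - xs‖ ≤
          2 * β * (γ * (‖y - xs‖ + ‖x - xs‖) * ‖y - xs‖) := by
        rw [hrec, norm_neg]
        calc ‖Binv (F y - F xs - (J x) (y - xs))‖
            ≤ ‖Binv‖ * ‖F y - F xs - (J x) (y - xs)‖ := Binv.le_opNorm _
          _ ≤ 2 * β * (γ * (‖y - xs‖ + ‖x - xs‖) * ‖y - xs‖) :=
              mul_le_mul hBinv_norm (hstep y) (norm_nonneg _) (by positivity)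
      have hbound : ‖chordIter F (J x) x (i + 1) - xs‖ ≤
          (4 * β * γ * ‖x - xs‖) * ‖y - xs‖ := by
        refine hnorm.trans ?_
        have h1 : ‖y - xs‖ + ‖x - xs‖ ≤ 2 * ‖x - xs‖ := by linarith [ih.1]
        have h2 : 2 * β * (γ * (‖y - xs‖ + ‖x - xs‖) * ‖y - xs‖) ≤
            2 * β * (γ * (2 * ‖x - xs‖) * ‖y - xs‖) := by
          gcongr
        refine h2.trans ?_
        apply le_of_eq
        ring
      constructor
      · refine hbound.trans ?_
        have hc : 4 * β * γ * ‖x - xs‖ ≤ 1 := by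
          nlinarith [h4βγδ]
        nlinarith [ih.1, norm_nonneg (y - xs), norm_nonneg (x - xs)]
      · refine hbound.trans ?_
        have := ih.2
        calc (4 * β * γ * ‖x - xs‖) * ‖y - xs‖
            ≤ (4 * β * γ * ‖x - xs‖) * ((4 * β * γ) ^ i * ‖x - xs‖ ^ (i + 1)) :=
              mul_le_mul_of_nonneg_left ih.2 (by positivity)
          _ = (4 * β * γ) ^ (i + 1) * ‖x - xs‖ ^ (i + 1 + 1) := by ring
  refine ⟨hJxUnit, fun i _ => (key i).1.trans hx, (key k).2⟩
end
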